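/- Exactly one of the following two statements holds: (1) R₂ ⊆ ℝ² ∖ int(D₀) and R₂ ∩ int(D_i) = ∅ for all 1 ≤ i ≤ h; or (2) there exists a unique index i with 1 ≤ i ≤ h such that R₂ ⊆ D_i and R₂ ∩ int(D_j) = ∅ for all 1 ≤ j ≤ h with j ≠ i. (This is Lemma A.1 (the enclosure lemma) of the paper: a second region either lies outside the outer disk of the first region, or is enclosed in exactly one of its holes.) -/

import Mathlib

open Set
open Convex Metric

local notation "X" => EuclideanSpace ℝ (Fin 2)

lemma aux_rank : (1 : Cardinal) < Module.rank ℝ X := by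
  rw [← Module.finrank_eq_rank, finrank_euclideanSpace_fin]
  exact_mod_cast one_lt_two

lemma aux_open_diff_nonempty {O P : Set X} (hO : IsOpen O) (hOne : O.Nonempty)
    (hP : P.Countable) : (O \ P).Nonempty := by
  have := (hP.dense_compl ℝ).inter_open_nonempty O hO hOne
  simpa [diff_eq] using this

lemma aux_open_subset_closure_diff {O P : Set X} (hO : IsOpen O) (hP : P.Countable) :
    O ⊆ closure (O \ P) := by
  intro x hx
  rw [_root_.mem_closure_iff]
  intro o ho hxo
  have : ((o ∩ O) \ P).Nonempty :=
    aux_open_diff_nonempty (ho.inter hO) ⟨x, hxo, hx⟩ hP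
  obtain ⟨y, ⟨hy1, hy2⟩, hy3⟩ := this
  exact ⟨y, hy1, hy2, hy3⟩

lemma aux_open_subsingleton {s : Set X} (hs : IsOpen s) (hss : s.Subsingleton) :
    s = ∅ := by
  by_contra hne
  obtain ⟨y, hy1, hy2⟩ := (hss.countable.dense_compl ℝ).inter_open_nonempty s hs
    (nonempty_iff_ne_empty.2 hne)
  exact hy2 hy1
/-- A convex open set minus a countable set is path connected (if nonempty). -/
lemma aux_convex_open_diff_countable {s P : Set X} (hconv : Convex ℝ s)
    (hs : IsOpen s) (hP : P.Countable) (hne : (s \ P).Nonempty) :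
    IsPathConnected (s \ P) := by
  obtain ⟨a, ha⟩ := hne
  refine ⟨a, ha, ?_⟩
  intro b hb
  rcases eq_or_ne a b with rfl | hab
  · exact JoinedIn.refl ha
  let c := (2 : ℝ)⁻¹ • (a + b)
  let x := (2 : ℝ)⁻¹ • (b - a)
  have Ia : c - x = a := by simp only [c, x]; module
  have Ib : c + x = b := by simp only [c, x]; module
  have hc : c ∈ s := by
    have := hconv ha.1 hb.1 (by norm_num : (0:ℝ) ≤ 2⁻¹) (by norm_num : (0:ℝ) ≤ 2⁻¹)
      (by norm_num)
    have e : (2 : ℝ)⁻¹ • a + (2 : ℝ)⁻¹ • b = c := by simp only [c]; module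
    rwa [e] at this
  have x_ne_zero : x ≠ 0 := by simpa [x, sub_eq_zero] using fun e => hab e.symm
  obtain ⟨y, hy⟩ : ∃ y, LinearIndependent ℝ ![x, y] :=
    exists_linearIndependent_pair_of_one_lt_rank aux_rank x_ne_zero
  have A : Set.Countable {t : ℝ | ([c + x -[ℝ] c + t • y] ∩ P).Nonempty} := by
    apply countable_setOf_nonempty_of_disjoint _ (fun t ↦ inter_subset_right) hP
    intro t t' htt'
    apply disjoint_iff_inter_eq_empty.2
    have N : {c + x} ∩ P = ∅ := by
      simpa only [singleton_inter_eq_empty, Ib] using hb.2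
    rw [inter_assoc, inter_comm P, inter_assoc, inter_self, ← inter_assoc, ← subset_empty_iff,
      ← N]
    apply inter_subset_inter_left
    exact (segment_inter_eq_endpoint_of_linearIndependent_of_ne hy htt'.symm ..).subset
  have B : Set.Countable {t : ℝ | ([c - x -[ℝ] c + t • y] ∩ P).Nonempty} := by
    apply countable_setOf_nonempty_of_disjoint _ (fun t ↦ inter_subset_right) hP
    intro t t' htt'
    apply disjoint_iff_inter_eq_empty.2
    have N : {c - x} ∩ P = ∅ := by
      simpa only [singleton_inter_eq_empty, Ia] using ha.2
    rw [inter_assoc, inter_comm P, inter_assoc, inter_self, ← inter_assoc, ← subset_empty_iff,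
      ← N]
    apply inter_subset_inter_left
    rw [sub_eq_add_neg _ x]
    apply Eq.subset
    apply segment_inter_eq_endpoint_of_linearIndependent_of_ne _ htt'.symm
    convert hy.units_smul ![-1, 1]
    simp [← List.ofFn_inj]
    rfl
  have hCopen : IsOpen {t : ℝ | c + t • y ∈ s} := by
    have hcont : Continuous fun t : ℝ => c + t • y :=
      continuous_const.add (continuous_id.smul continuous_const)
    exact hs.preimage hcont
  have hCne : ({t : ℝ | c + t • y ∈ s}).Nonempty := ⟨0, by simpa using hc⟩
  obtain ⟨t, htC, htAB⟩ : ∃ t, c + t • y ∈ s ∧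
      t ∈ ({t : ℝ | ([c + x -[ℝ] c + t • y] ∩ P).Nonempty}
        ∪ {t : ℝ | ([c - x -[ℝ] c + t • y] ∩ P).Nonempty})ᶜ := by
    obtain ⟨t, ht1, ht2⟩ := ((A.union B).dense_compl ℝ).inter_open_nonempty _ hCopen hCne
    exact ⟨t, ht1, ht2⟩
  simp only [compl_union, mem_inter_iff, mem_compl_iff, mem_setOf_eq,
    not_nonempty_iff_eq_empty] at htAB
  set z := c + t • y with hz
  have hzs : z ∈ s := htC
  have segsub : ∀ w : X, w ∈ s → [w -[ℝ] z] ⊆ s := fun w hw =>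
    hconv.segment_subset hw hzs
  have JA : JoinedIn (s \ P) a z := by
    apply JoinedIn.of_segment_subset
    intro w hw
    have hws : w ∈ s := segsub a ha.1 hw
    refine ⟨hws, fun hwP => ?_⟩
    have : ([c - x -[ℝ] c + t • y] ∩ P).Nonempty := ⟨w, by rwa [Ia], hwP⟩
    rw [htAB.2] at this
    exact this.ne_empty rfl
  have JB : JoinedIn (s \ P) b z := by
    apply JoinedIn.of_segment_subset
    intro w hw
    have hws : w ∈ s := segsub b hb.1 hw
    refine ⟨hws, fun hwP => ?_⟩
    have : ([c + x -[ℝ] c + t • y] ∩ P).Nonempty := ⟨w, by rwa [Ib], hwP⟩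
    rw [htAB.1] at this
    exact this.ne_empty rfl
  exact JA.trans JB.symm
lemma aux_diff_singleton_preconnected {U : Set X} (hU : IsOpen U)
    (hUc : IsPreconnected U) (p : X) : IsPreconnected (U \ {p}) := by
  by_cases hp : p ∈ U
  swap
  · rwa [diff_singleton_eq_self hp]
  intro u v hu hv hcov hneu hnev
  obtain ⟨ε, hε, hball⟩ := Metric.isOpen_iff.1 hU p hp
  set B := ball p ε with hB
  have hBne : (B \ {p}).Nonempty :=
    aux_open_diff_nonempty isOpen_ball (nonempty_ball.2 hε) (countable_singleton p)
  have hBpc : IsPreconnected (B \ {p}) :=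
    (aux_convex_open_diff_countable (convex_ball p ε) isOpen_ball
      (countable_singleton p) hBne).isConnected.isPreconnected
  have hBsub : B \ {p} ⊆ U \ {p} := diff_subset_diff_left hball
  have hBcov : B \ {p} ⊆ u ∪ v := hBsub.trans hcov
  by_cases hBu : ((B \ {p}) ∩ u).Nonempty
  · by_cases hBv : ((B \ {p}) ∩ v).Nonempty
    · obtain ⟨w, hw⟩ := hBpc u v hu hv hBcov hBu hBv
      exact ⟨w, hBsub hw.1, hw.2⟩
    · -- B \ {p} ⊆ u
      have hBu' : B \ {p} ⊆ u := by
        intro w hw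
        rcases hBcov hw with h1 | h1
        · exact h1
        · exact absurd ⟨w, hw, h1⟩ hBv
      -- apply preconnectedness of U to (u ∪ B) and v
      have hcov' : U ⊆ (u ∪ B) ∪ v := by
        intro w hw
        by_cases hwp : w = p
        · exact Or.inl (Or.inr (show w ∈ B by rw [hwp]; exact mem_ball_self hε))
        · rcases hcov ⟨hw, hwp⟩ with h1 | h1
          · exact Or.inl (Or.inl h1)
          · exact Or.inr h1
      have hUuB : (U ∩ (u ∪ B)).Nonempty :=
        ⟨p, hp, Or.inr (mem_ball_self hε)⟩
      have hUv : (U ∩ v).Nonempty := by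
        obtain ⟨w, hw1, hw2⟩ := hnev
        exact ⟨w, hw1.1, hw2⟩
      obtain ⟨w, hwU, hwuv⟩ := hUc (u ∪ B) v (hu.union isOpen_ball) hv hcov' hUuB hUv
      by_cases hwp : w = p
      · -- p ∈ v; pick a point of B \ {p} inside v near p
        have hpv : p ∈ v := hwp ▸ hwuv.2
        obtain ⟨δ, hδ, hδv⟩ := Metric.isOpen_iff.1 hv p hpv
        have hmin : (0 : ℝ) < min δ ε := lt_min hδ hε
        obtain ⟨q, hq1, hq2⟩ := aux_open_diff_nonempty (isOpen_ball (x := p) (ε := min δ ε))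
          (nonempty_ball.2 hmin) (countable_singleton p)
        have hqB : q ∈ B \ {p} :=
          ⟨mem_of_mem_of_subset hq1 (ball_subset_ball (min_le_right _ _)), hq2⟩
        refine ⟨q, hBsub hqB, hBu' hqB, hδv ?_⟩
        exact mem_of_mem_of_subset hq1 (ball_subset_ball (min_le_left _ _))
      · refine ⟨w, ⟨hwU, hwp⟩, ?_, hwuv.2⟩
        rcases hwuv.1 with h1 | h1
        · exact h1
        · exact hBu' ⟨h1, hwp⟩
  · -- B \ {p} ⊆ v, symmetric
    have hBv' : B \ {p} ⊆ v := by
      intro w hw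
      rcases hBcov hw with h1 | h1
      · exact absurd ⟨w, hw, h1⟩ hBu
      · exact h1
    have hcov' : U ⊆ u ∪ (v ∪ B) := by
      intro w hw
      by_cases hwp : w = p
      · exact Or.inr (Or.inr (show w ∈ B by rw [hwp]; exact mem_ball_self hε))
      · rcases hcov ⟨hw, hwp⟩ with h1 | h1
        · exact Or.inl h1
        · exact Or.inr (Or.inl h1)
    have hUvB : (U ∩ (v ∪ B)).Nonempty :=
      ⟨p, hp, Or.inr (mem_ball_self hε)⟩
    have hUu : (U ∩ u).Nonempty := by
      obtain ⟨w, hw1, hw2⟩ := hneu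
      exact ⟨w, hw1.1, hw2⟩
    obtain ⟨w, hwU, hwuv⟩ := hUc u (v ∪ B) hu (hv.union isOpen_ball) hcov' hUu hUvB
    by_cases hwp : w = p
    · have hpu : p ∈ u := hwp ▸ hwuv.1
      obtain ⟨δ, hδ, hδu⟩ := Metric.isOpen_iff.1 hu p hpu
      have hmin : (0 : ℝ) < min δ ε := lt_min hδ hε
      obtain ⟨q, hq1, hq2⟩ := aux_open_diff_nonempty (isOpen_ball (x := p) (ε := min δ ε))
        (nonempty_ball.2 hmin) (countable_singleton p)
      have hqB : q ∈ B \ {p} :=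
        ⟨mem_of_mem_of_subset hq1 (ball_subset_ball (min_le_right _ _)), hq2⟩
      refine ⟨q, hBsub hqB, hδu ?_, hBv' hqB⟩
      exact mem_of_mem_of_subset hq1 (ball_subset_ball (min_le_left _ _))
    · refine ⟨w, ⟨hwU, hwp⟩, hwuv.1, ?_⟩
      rcases hwuv.2 with h1 | h1
      · exact h1
      · exact hBv' ⟨h1, hwp⟩

lemma aux_diff_finite_preconnected {U : Set X} (hU : IsOpen U)
    (hUc : IsPreconnected U) {P : Set X} (hP : P.Finite) :
    IsPreconnected (U \ P) := by
  classical
  rw [← hP.coe_toFinset]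
  generalize hP.toFinset = Q
  induction Q using Finset.induction_on with
  | empty => simpa using hUc
  | @insert a Q haQ ih =>
      have e : U \ ↑(insert a Q) = (U \ ↑Q) \ {a} := by
        rw [Finset.coe_insert, ← union_singleton, ← diff_diff]
      rw [e]
      exact aux_diff_singleton_preconnected (hU.sdiff Q.finite_toSet.isClosed) ih a

lemma aux_preconnected_subset_closed_cover {S : Set X} (hS : IsPreconnected S)
    (hne : S.Nonempty) (T : Finset ℕ) (F : ℕ → Set X)
    (hcl : ∀ i ∈ T, IsClosed (F i)) (hcov : S ⊆ ⋃ i ∈ T, F i)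
    (hdis : ∀ i ∈ T, ∀ j ∈ T, i ≠ j → S ∩ F i ∩ F j = ∅) :
    ∃ i ∈ T, S ⊆ F i := by
  induction T using Finset.induction_on with
  | empty => simp only [Finset.notMem_empty, iUnion_of_empty, iUnion_empty,
      subset_empty_iff] at hcov; exact (hne.ne_empty hcov).elim
  | @insert a T haT ih =>
      have hGclosed : IsClosed (⋃ i ∈ T, F i) := by
        apply isClosed_biUnion_finset
        intro i hi; exact hcl i (Finset.mem_insert_of_mem hi)
      have hFa : IsClosed (F a) := hcl a (Finset.mem_insert_self a T)
      have hcov' : S ⊆ F a ∪ ⋃ i ∈ T, F i := by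
        intro w hw
        rcases mem_iUnion₂.1 (hcov hw) with ⟨i, hi, hwi⟩
        rcases Finset.mem_insert.1 hi with rfl | hi'
        · exact Or.inl hwi
        · exact Or.inr (mem_iUnion₂.2 ⟨i, hi', hwi⟩)
      -- S ⊆ (⋃ T)ᶜ ∪ (F a)ᶜ
      have hsub2 : S ⊆ (⋃ i ∈ T, F i)ᶜ ∪ (F a)ᶜ := by
        intro w hw
        by_cases hwa : w ∈ F a
        · left
          intro hwG
          rcases mem_iUnion₂.1 hwG with ⟨j, hj, hwj⟩
          have hja : a ≠ j := by rintro rfl; exact haT hj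
          have := hdis a (Finset.mem_insert_self a T) j (Finset.mem_insert_of_mem hj) hja
          exact absurd (by exact ⟨⟨hw, hwa⟩, hwj⟩ : w ∈ S ∩ F a ∩ F j) (by rw [this]; simp)
        · exact Or.inr hwa
      have hempty : S ∩ (⋃ i ∈ T, F i)ᶜ ∩ (F a)ᶜ = ∅ := by
        ext w; simp only [mem_inter_iff, mem_compl_iff, mem_empty_iff_false, iff_false]
        rintro ⟨⟨hwS, hwG⟩, hwa⟩
        rcases hcov' hwS with h1 | h1
        · exact hwa h1
        · exact hwG h1
      by_cases hA : (S ∩ (⋃ i ∈ T, F i)ᶜ).Nonempty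
      · by_cases hB : (S ∩ (F a)ᶜ).Nonempty
        · obtain ⟨w, hw⟩ := hS _ _ hGclosed.isOpen_compl hFa.isOpen_compl hsub2 hA hB
          rw [← inter_assoc, hempty] at hw
          exact absurd hw (by simp)
        · -- S ⊆ F a
          refine ⟨a, Finset.mem_insert_self a T, fun w hw => ?_⟩
          by_contra hwa
          exact hB ⟨w, hw, hwa⟩
      · -- S ⊆ ⋃ T
        have hsubG : S ⊆ ⋃ i ∈ T, F i := by
          intro w hw
          by_contra hwG
          exact hA ⟨w, hw, hwG⟩
        obtain ⟨i, hi, hSi⟩ := ih (fun i hi => hcl i (Finset.mem_insert_of_mem hi)) hsubG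
          (fun i hi j hj hij => hdis i (Finset.mem_insert_of_mem hi) j
            (Finset.mem_insert_of_mem hj) hij)
        exact ⟨i, Finset.mem_insert_of_mem hi, hSi⟩

/-- A topological closed disk in the plane: a subset homeomorphic (with its
subspace topology) to the closed unit disk in `ℝ²`. -/
def IsTopClosedDisk (D : Set (EuclideanSpace ℝ (Fin 2))) : Prop :=
  Nonempty (D ≃ₜ (Metric.closedBall (0 : EuclideanSpace ℝ (Fin 2)) 1 : Set (EuclideanSpace ℝ (Fin 2))))

/-- **Enclosure lemma** (Lemma A.1). Let `R₁ = D₀ \ ⋃_{i=1}^h int(D i)` be a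
disk-with-holes region and `R₂` a second region whose interior is nonempty and
connected and does not meet `int R₁`. Then exactly one of the following holds:
(1) `R₂` lies outside `int D₀` and misses the interiors of all the holes; or
(2) `R₂` is enclosed in exactly one hole `D i` and misses the interiors of all
the other holes. -/
theorem enclosure_lemma
    (h : ℕ) (D : ℕ → Set (EuclideanSpace ℝ (Fin 2)))
    (hdisk : ∀ i ≤ h, IsTopClosedDisk (D i))
    (hsub : ∀ i, 1 ≤ i → i ≤ h → D i ⊆ D 0)
    (hpair : ∀ i j, 1 ≤ i → i < j → j ≤ h → (D i ∩ D j).Subsingleton)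
    (hout : ∀ i, 1 ≤ i → i ≤ h → (D i ∩ (interior (D 0))ᶜ).Subsingleton)
    (R₂ : Set (EuclideanSpace ℝ (Fin 2)))
    (hne : (interior R₂).Nonempty)
    (hconn : IsPreconnected (interior R₂))
    (hreg : R₂ ⊆ closure (interior R₂))
    (hdisj : interior (D 0 \ ⋃ i ∈ Icc 1 h, interior (D i)) ∩ interior R₂ = ∅) :
    Xor'
      (R₂ ⊆ (interior (D 0))ᶜ ∧ ∀ i, 1 ≤ i → i ≤ h → R₂ ∩ interior (D i) = ∅)
      (∃! i, 1 ≤ i ∧ i ≤ h ∧ R₂ ⊆ D i ∧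
        ∀ j, 1 ≤ j → j ≤ h → j ≠ i → R₂ ∩ interior (D j) = ∅) := by
  classical
  set U := interior R₂ with hU_def
  have hUopen : IsOpen U := isOpen_interior
  -- disks are closed
  have hclosed : ∀ i ≤ h, IsClosed (D i) := by
    intro i hi
    obtain ⟨e⟩ := hdisk i hi
    have h1 : CompactSpace (Metric.closedBall (0 : X) 1 : Set X) :=
      isCompact_iff_compactSpace.1 (isCompact_closedBall 0 1)
    have h2 : CompactSpace (D i) := e.symm.compactSpace
    exact (isCompact_iff_compactSpace.2 h2).isClosed
  have hD0closed : IsClosed (D 0) := hclosed 0 (Nat.zero_le h)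
  -- interiors of the holes are contained in the interior of the outer disk
  have hint_sub : ∀ i, 1 ≤ i → i ≤ h → interior (D i) ⊆ interior (D 0) := by
    intro i h1 h2 x hx
    by_contra hx0
    obtain ⟨ε, hε, hball⟩ := Metric.isOpen_iff.1 isOpen_interior x hx
    have hBD : ball x ε ⊆ D i := hball.trans interior_subset
    have hsd : ball x ε \ {x} ⊆ interior (D 0) := by
      rintro y ⟨hy1, hy2⟩
      by_contra hy0
      exact hy2 (mem_singleton_iff.2
        (hout i h1 h2 ⟨hBD hy1, hy0⟩ ⟨hBD (mem_ball_self hε), hx0⟩))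
    have hBD0 : ball x ε ⊆ D 0 := by
      calc ball x ε ⊆ closure (ball x ε \ {x}) :=
            aux_open_subset_closure_diff isOpen_ball (countable_singleton x)
        _ ⊆ closure (interior (D 0)) := closure_mono hsd
        _ ⊆ closure (D 0) := closure_mono interior_subset
        _ = D 0 := hD0closed.closure_eq
    exact hx0 (interior_maximal hBD0 isOpen_ball (mem_ball_self hε))
  -- subsingleton of pairwise intersections (symmetric version)
  have hpair' : ∀ i j, 1 ≤ i → i ≤ h → 1 ≤ j → j ≤ h → i ≠ j → (D i ∩ D j).Subsingleton := by
    intro i j hi1 hi2 hj1 hj2 hij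
    rcases lt_or_gt_of_ne hij with hlt | hgt
    · exact hpair i j hi1 hlt hj2
    · rw [inter_comm]; exact hpair j i hj1 hgt hi2
  -- the bad finite sets
  set P1 : Set X := ⋃ i ∈ Icc 1 h, (D i ∩ (interior (D 0))ᶜ) with hP1_def
  set P2 : Set X := ⋃ i ∈ Icc 1 h, ⋃ j ∈ Icc 1 h, (if i = j then ∅ else D i ∩ D j) with hP2_def
  have hP1fin : P1.Finite :=
    Set.Finite.biUnion (finite_Icc 1 h) (fun i hi => (hout i hi.1 hi.2).finite)
  have hP2fin : P2.Finite := by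
    apply Set.Finite.biUnion (finite_Icc 1 h)
    intro i hi
    apply Set.Finite.biUnion (finite_Icc 1 h)
    intro j hj
    by_cases hij : i = j
    · rw [if_pos hij]; exact finite_empty
    · rw [if_neg hij]; exact (hpair' i j hi.1 hi.2 hj.1 hj.2 hij).finite
  have hP2sub : ∀ i j, i ∈ Icc 1 h → j ∈ Icc 1 h → i ≠ j → D i ∩ D j ⊆ P2 := by
    intro i j hi hj hij x hx
    refine mem_biUnion hi (mem_biUnion hj ?_)
    rw [if_neg hij]; exact hx
  have hPfin : (P1 ∪ P2).Finite := hP1fin.union hP2fin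
  have hPcnt : (P1 ∪ P2).Countable := hPfin.countable
  -- covering claim: points of U inside the interior of D 0 are inside some hole interior
  have hcover : ∀ x, x ∈ U → x ∈ interior (D 0) → ∃ i, i ∈ Icc 1 h ∧ x ∈ interior (D i) := by
    intro x hxU hx0
    obtain ⟨ε, hε, hball⟩ :=
      Metric.isOpen_iff.1 (hUopen.inter isOpen_interior) x ⟨hxU, hx0⟩
    have hBD : ball x ε ⊆ ⋃ i ∈ Icc 1 h, D i := by
      intro y hy
      by_contra hyD
      have hyO : y ∈ interior (D 0) ∩ ⋂ i ∈ Icc 1 h, (D i)ᶜ := by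
        refine ⟨(hball hy).2, ?_⟩
        simp only [mem_iInter, mem_compl_iff]
        intro i hi hyDi
        exact hyD (mem_biUnion hi hyDi)
      have hOopen : IsOpen (interior (D 0) ∩ ⋂ i ∈ Icc 1 h, (D i)ᶜ) :=
        isOpen_interior.inter
          ((finite_Icc 1 h).isOpen_biInter (fun i hi => (hclosed i hi.2).isOpen_compl))
      have hOsub : interior (D 0) ∩ (⋂ i ∈ Icc 1 h, (D i)ᶜ) ⊆
          D 0 \ ⋃ i ∈ Icc 1 h, interior (D i) := by
        rintro z ⟨hz0, hz⟩
        refine ⟨interior_subset hz0, ?_⟩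
        intro hzU
        rcases mem_iUnion₂.1 hzU with ⟨i, hi, hzi⟩
        exact (mem_iInter₂.1 hz i hi) (interior_subset hzi)
      have hyint : y ∈ interior (D 0 \ ⋃ i ∈ Icc 1 h, interior (D i)) :=
        interior_maximal hOsub hOopen hyO
      rw [eq_empty_iff_forall_notMem] at hdisj
      exact hdisj y ⟨hyint, (hball hy).1⟩
    have hB'ne : (ball x ε \ P2).Nonempty :=
      aux_open_diff_nonempty isOpen_ball (nonempty_ball.2 hε) hP2fin.countable
    have hB'pc : IsPreconnected (ball x ε \ P2) :=
      (aux_convex_open_diff_countable (convex_ball x ε) isOpen_ball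
        hP2fin.countable hB'ne).isConnected.isPreconnected
    obtain ⟨i, hiT, hBi⟩ := aux_preconnected_subset_closed_cover hB'pc hB'ne
      (Finset.Icc 1 h) D
      (fun i hi => hclosed i (Finset.mem_Icc.1 hi).2)
      (by
        intro z hz
        rcases mem_iUnion₂.1 (hBD hz.1) with ⟨i, hi, hzi⟩
        exact mem_biUnion (Finset.mem_Icc.2 hi) hzi)
      (by
        intro i hi j hj hij
        apply eq_empty_iff_forall_notMem.2
        rintro z ⟨⟨hzS, hzi⟩, hzj⟩
        exact hzS.2 (hP2sub i j (Finset.mem_Icc.1 hi) (Finset.mem_Icc.1 hj) hij ⟨hzi, hzj⟩))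
    have hBDi : ball x ε ⊆ D i := by
      calc ball x ε ⊆ closure (ball x ε \ P2) :=
            aux_open_subset_closure_diff isOpen_ball hP2fin.countable
        _ ⊆ closure (D i) := closure_mono hBi
        _ = D i := (hclosed i (Finset.mem_Icc.1 hiT).2).closure_eq
    exact ⟨i, Finset.mem_Icc.1 hiT, interior_maximal hBDi isOpen_ball (mem_ball_self hε)⟩
  -- from emptiness of U ∩ interior (D j) to emptiness of R₂ ∩ interior (D j)
  have key : ∀ j, U ∩ interior (D j) = ∅ → R₂ ∩ interior (D j) = ∅ := by
    intro j hUj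
    apply eq_empty_iff_forall_notMem.2
    rintro z ⟨hz1, hz2⟩
    have hz4 : z ∈ closure (interior (D j) ∩ U) :=
      isOpen_interior.inter_closure ⟨hz2, hreg hz1⟩
    have h5 : interior (D j) ∩ U = ∅ := by rw [inter_comm]; exact hUj
    rw [h5, closure_empty] at hz4
    exact hz4
  -- the global decomposition
  set U' := U \ (P1 ∪ P2) with hU'_def
  have hU'ne : U'.Nonempty := aux_open_diff_nonempty hUopen hne hPcnt
  have hU'pc : IsPreconnected U' := aux_diff_finite_preconnected hUopen hconn hPfin
  set F : ℕ → Set X := fun i => if i = 0 then (interior (D 0))ᶜ else closure (interior (D i))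
    with hF_def
  have hF0 : F 0 = (interior (D 0))ᶜ := by simp [hF_def]
  have hFi : ∀ i, i ≠ 0 → F i = closure (interior (D i)) := fun i hi => by simp [hF_def, hi]
  have hFsubD : ∀ i, 1 ≤ i → i ≤ h → F i ⊆ D i := by
    intro i hi1 hi2
    rw [hFi i (by omega)]
    exact closure_minimal interior_subset (hclosed i hi2)
  obtain ⟨i, hiT, hU'F⟩ := aux_preconnected_subset_closed_cover hU'pc hU'ne
    (Finset.Icc 0 h) F
    (by
      intro i _
      by_cases hi : i = 0
      · rw [hi, hF0]; exact isOpen_interior.isClosed_compl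
      · rw [hFi i hi]; exact isClosed_closure)
    (by
      intro z hz
      by_cases hz0 : z ∈ interior (D 0)
      · obtain ⟨i, hi, hzi⟩ := hcover z hz.1 hz0
        refine mem_biUnion (Finset.mem_Icc.2 ⟨Nat.zero_le i, hi.2⟩) ?_
        rw [hFi i (by have := hi.1; omega)]
        exact subset_closure hzi
      · exact mem_biUnion (Finset.mem_Icc.2 ⟨le_refl 0, Nat.zero_le h⟩) (by rw [hF0]; exact hz0))
    (by
      intro i hi j hj hij
      apply eq_empty_iff_forall_notMem.2
      rintro z ⟨⟨hzS, hzi⟩, hzj⟩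
      have hiIcc := Finset.mem_Icc.1 hi
      have hjIcc := Finset.mem_Icc.1 hj
      have hzP : z ∉ P1 ∪ P2 := hzS.2
      by_cases hi0 : i = 0
      · have hj0 : j ≠ 0 := by omega
        have hzDj : z ∈ D j := hFsubD j (by omega) hjIcc.2 hzj
        rw [hi0, hF0] at hzi
        exact hzP (Or.inl (mem_biUnion (mem_Icc.2 ⟨by omega, hjIcc.2⟩) ⟨hzDj, hzi⟩))
      · by_cases hj0 : j = 0
        · have hzDi : z ∈ D i := hFsubD i (by omega) hiIcc.2 hzi
          rw [hj0, hF0] at hzj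
          exact hzP (Or.inl (mem_biUnion (mem_Icc.2 ⟨by omega, hiIcc.2⟩) ⟨hzDi, hzj⟩))
        · have hzDi : z ∈ D i := hFsubD i (by omega) hiIcc.2 hzi
          have hzDj : z ∈ D j := hFsubD j (by omega) hjIcc.2 hzj
          exact hzP (Or.inr (hP2sub i j (mem_Icc.2 ⟨by omega, hiIcc.2⟩)
            (mem_Icc.2 ⟨by omega, hjIcc.2⟩) hij ⟨hzDi, hzDj⟩)))
  have hUclos : U ⊆ closure U' := aux_open_subset_closure_diff hUopen hPcnt
  have hiIcc := Finset.mem_Icc.1 hiT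
  by_cases hi0 : i = 0
  · -- case (1): R₂ lies outside the interior of D 0
    have hUF0 : U ⊆ (interior (D 0))ᶜ := by
      rw [hi0, hF0] at hU'F
      exact hUclos.trans (closure_minimal hU'F isOpen_interior.isClosed_compl)
    have hR0 : R₂ ⊆ (interior (D 0))ᶜ :=
      hreg.trans (closure_minimal hUF0 isOpen_interior.isClosed_compl)
    have hRint : ∀ j, 1 ≤ j → j ≤ h → R₂ ∩ interior (D j) = ∅ := by
      intro j hj1 hj2
      apply key
      apply eq_empty_iff_forall_notMem.2
      rintro z ⟨hz1, hz2⟩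
      exact (hUF0 hz1) (hint_sub j hj1 hj2 hz2)
    refine Or.inl ⟨⟨hR0, hRint⟩, ?_⟩
    rintro ⟨i, ⟨hi1, hi2, hiR, -⟩, -⟩
    obtain ⟨x₀, hx₀⟩ := hne
    have hx₀i : x₀ ∈ interior (D i) := interior_mono hiR hx₀
    have : x₀ ∈ R₂ ∩ interior (D i) := ⟨interior_subset hx₀, hx₀i⟩
    rw [hRint i hi1 hi2] at this
    exact this
  · -- case (2): R₂ is enclosed in hole i
    have hi1 : 1 ≤ i := by omega
    have hi2 : i ≤ h := hiIcc.2
    have hU'Di : U' ⊆ closure (interior (D i)) := by rwa [hFi i hi0] at hU'F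
    have hUDi : U ⊆ D i :=
      hUclos.trans ((closure_mono hU'Di).trans
        (by rw [closure_closure]; exact closure_minimal interior_subset (hclosed i hi2)))
    have hRDi : R₂ ⊆ D i := hreg.trans (closure_minimal hUDi (hclosed i hi2))
    obtain ⟨x₀, hx₀⟩ := hU'ne
    have hx₀c : x₀ ∈ closure (interior (D i)) := hU'Di hx₀
    rw [_root_.mem_closure_iff] at hx₀c
    obtain ⟨y₀, hy₀U, hy₀i⟩ := hx₀c U' (hUopen.sdiff hPfin.isClosed) hx₀
    have hy₀R : y₀ ∈ R₂ := interior_subset hy₀U.1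
    have hmiss : ∀ j, 1 ≤ j → j ≤ h → j ≠ i → R₂ ∩ interior (D j) = ∅ := by
      intro j hj1 hj2 hji
      apply key
      apply aux_open_subsingleton (hUopen.inter isOpen_interior)
      intro a ha b hb
      exact hpair' i j hi1 hi2 hj1 hj2 (fun e => hji e.symm)
        ⟨hUDi ha.1, interior_subset ha.2⟩ ⟨hUDi hb.1, interior_subset hb.2⟩
        |>.symm ▸ rfl
    refine Or.inr ⟨⟨i, ⟨hi1, hi2, hRDi, hmiss⟩, ?_⟩, ?_⟩
    · rintro y ⟨hy1, hy2, hyR, hymiss⟩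
      by_contra hyne
      have : y₀ ∈ R₂ ∩ interior (D i) := ⟨hy₀R, hy₀i⟩
      rw [hymiss i hi1 hi2 (fun e => hyne e.symm)] at this
      exact this
    · rintro ⟨-, hA2⟩
      have : y₀ ∈ R₂ ∩ interior (D i) := ⟨hy₀R, hy₀i⟩
      rw [hA2 i hi1 hi2] at this
      exact this
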